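/- arXiv:2204.07623 — 3 statements merged into one kernel-verified Lean document; each statement's English description precedes it below -/
import Mathlib

section
/- Fix a dimension n, a constant c > 0 and positive weights γ : Fin n → ℝ (γᵢ > 0 for all i). Define δ : ℝⁿ → ℝ by δ(ξ) = (π/c)·√(Σᵢ γᵢ ξᵢ²) and g : ℝⁿ → ℝ by g(ξ) = 1 + cos(δ(ξ)) if δ(ξ) ≤ π and g(ξ) = 0 otherwise. Then g is differentiable at every point of ℝⁿ. -/
open Real

/-- `1 - cos t ≤ t² / 2` for all real `t`. -/
lemma aux_one_sub_cos_le_half_sq (t : ℝ) : 1 - Real.cos t ≤ t ^ 2 / 2 := by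
  have h1 := Real.sin_sq_le_sq (x := t / 2)
  have h2 := Real.cos_sq (t / 2)
  have h3 := Real.sin_sq_add_cos_sq (t / 2)
  have ht : 2 * (t / 2) = t := by ring
  rw [ht] at h2
  nlinarith

/-- A quadratic bound on the increments near a point forces differentiability
(with derivative zero) at that point. -/
lemma aux_differentiableAt_of_sq_bound {E : Type*} [NormedAddCommGroup E] [NormedSpace ℝ E]
    (f : E → ℝ) (x : E) (C : ℝ)
    (h : ∀ᶠ y in nhds x, |f y - f x| ≤ C * ‖y - x‖ ^ 2) :
    DifferentiableAt ℝ f x := by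
  have hD : (0 : ℝ) < max C 1 := lt_of_lt_of_le one_pos (le_max_right _ _)
  have : HasFDerivAt f (0 : E →L[ℝ] ℝ) x := by
    rw [hasFDerivAt_iff_isLittleO_nhds_zero]
    simp only [ContinuousLinearMap.zero_apply, sub_zero]
    rw [Asymptotics.isLittleO_iff]
    intro ε hε
    have htend : Filter.Tendsto (fun z : E => x + z) (nhds 0) (nhds x) := by
      simpa using (continuous_add_left x).tendsto (0 : E)
    have h' : ∀ᶠ z in nhds (0 : E), |f (x + z) - f x| ≤ C * ‖z‖ ^ 2 := by
      filter_upwards [htend.eventually h] with z hz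
      simpa [add_sub_cancel_left] using hz
    have hball : ∀ᶠ z in nhds (0 : E), ‖z‖ ≤ ε / max C 1 := by
      have := Metric.closedBall_mem_nhds (0 : E) (show (0:ℝ) < ε / max C 1 by positivity)
      filter_upwards [this] with z hz
      simpa [dist_zero_right] using hz
    filter_upwards [h', hball] with z hy1 hy2
    rw [Real.norm_eq_abs]
    have h0 : (0:ℝ) ≤ ‖z‖ := norm_nonneg _
    calc |f (x + z) - f x| ≤ C * ‖z‖ ^ 2 := hy1
      _ ≤ max C 1 * ‖z‖ ^ 2 := by nlinarith [le_max_left C 1]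
      _ = max C 1 * ‖z‖ * ‖z‖ := by ring
      _ ≤ max C 1 * (ε / max C 1) * ‖z‖ := by
          nlinarith [mul_le_mul_of_nonneg_right (mul_le_mul_of_nonneg_left hy2 hD.le) h0]
      _ = ε * ‖z‖ := by field_simp
  exact this.differentiableAt

/-- The unnormalized weighting kernel `g(ξ) = (1 + cos δ(ξ))` for `δ(ξ) ≤ π` and `0`
otherwise, with `δ(ξ) = (π/c)·√(∑ i, γ i * ξ i ^ 2)`, is differentiable everywhere. -/
theorem kernel_differentiable
    (n : ℕ) (c : ℝ) (hc : 0 < c)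
    (γ : Fin n → ℝ) (hγ : ∀ i, 0 < γ i)
    (δ : EuclideanSpace ℝ (Fin n) → ℝ)
    (hδ : ∀ ξ, δ ξ = (π / c) * Real.sqrt (∑ i, γ i * ξ i ^ 2))
    (g : EuclideanSpace ℝ (Fin n) → ℝ)
    (hg : ∀ ξ, g ξ = if δ ξ ≤ π then 1 + Real.cos (δ ξ) else 0) :
    ∀ ξ : EuclideanSpace ℝ (Fin n), DifferentiableAt ℝ g ξ := by
  classical
  -- the linear map `T ξ i = √(γ i) * ξ i`
  have hπc : (0:ℝ) < π / c := div_pos Real.pi_pos hc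
  let Tl : EuclideanSpace ℝ (Fin n) →ₗ[ℝ] EuclideanSpace ℝ (Fin n) :=
    { toFun := fun x => WithLp.toLp 2 (fun i => Real.sqrt (γ i) * x i)
      map_add' := by
        intro x y; ext i
        simp [PiLp.add_apply, mul_add]
      map_smul' := by
        intro a x; ext i
        simp [PiLp.smul_apply, smul_eq_mul]; ring }
  let T : EuclideanSpace ℝ (Fin n) →L[ℝ] EuclideanSpace ℝ (Fin n) :=
    Tl.toContinuousLinearMap
  have hTapply : ∀ (x : EuclideanSpace ℝ (Fin n)) (i : Fin n),
      T x i = Real.sqrt (γ i) * x i := fun x i => rfl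
  have hTnorm : ∀ x : EuclideanSpace ℝ (Fin n),
      ‖T x‖ = Real.sqrt (∑ i, γ i * x i ^ 2) := by
    intro x
    rw [EuclideanSpace.norm_eq]
    congr 1
    apply Finset.sum_congr rfl
    intro i _
    rw [hTapply, Real.norm_eq_abs, sq_abs, mul_pow, Real.sq_sqrt (hγ i).le]
  have hδT : ∀ x, δ x = (π / c) * ‖T x‖ := by
    intro x; rw [hδ, hTnorm]
  have hδcont : Continuous δ := by
    have : δ = fun x => (π / c) * ‖T x‖ := funext hδT
    rw [this]
    exact continuous_const.mul T.continuous.norm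
  -- Lipschitz-type bound for δ
  set K : ℝ := (π / c) * ‖T‖ with hKdef
  have hK0 : 0 ≤ K := mul_nonneg hπc.le (norm_nonneg _)
  have hKlip : ∀ x y : EuclideanSpace ℝ (Fin n), |δ x - δ y| ≤ K * ‖x - y‖ := by
    intro x y
    rw [hδT, hδT, ← mul_sub, abs_mul, abs_of_pos hπc, hKdef, mul_assoc]
    refine mul_le_mul_of_nonneg_left ?_ hπc.le
    calc |‖T x‖ - ‖T y‖| ≤ ‖T x - T y‖ := abs_norm_sub_norm_le _ _
      _ = ‖T (x - y)‖ := by rw [map_sub]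
      _ ≤ ‖T‖ * ‖x - y‖ := T.le_opNorm _
  have hδnonneg : ∀ x, 0 ≤ δ x := by
    intro x; rw [hδ]; positivity
  intro ξ
  rcases lt_trichotomy (δ ξ) π with hlt | heq | hgt
  · -- δ ξ < π
    rcases eq_or_ne ξ 0 with rfl | hne
    · -- ξ = 0 : derivative zero, quadratic bound
      have hδ0 : δ 0 = 0 := by
        rw [hδ]
        simp [PiLp.zero_apply]
      have hg0 : g 0 = 2 := by
        rw [hg, hδ0, if_pos (le_of_lt Real.pi_pos), Real.cos_zero]; norm_num
      have hopen : IsOpen {y | δ y < π} := isOpen_lt hδcont continuous_const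
      apply aux_differentiableAt_of_sq_bound g 0 (K ^ 2 / 2)
      have hmem : {y | δ y < π} ∈ nhds (0 : EuclideanSpace ℝ (Fin n)) :=
        hopen.mem_nhds (by simpa [hδ0] using hlt)
      filter_upwards [hmem] with y hy
      rw [hg y, if_pos hy.le, hg0]
      have hb : |δ y - δ 0| ≤ K * ‖y - 0‖ := hKlip y 0
      rw [hδ0, sub_zero] at hb
      have hδy : 0 ≤ δ y := hδnonneg y
      rw [abs_of_nonneg hδy] at hb
      have hcos := aux_one_sub_cos_le_half_sq (δ y)
      have h1 : 1 + Real.cos (δ y) - 2 = -(1 - Real.cos (δ y)) := by ring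
      rw [h1, abs_neg, abs_of_nonneg (by nlinarith [Real.cos_le_one (δ y)])]
      have hyn : (0:ℝ) ≤ ‖y - (0 : EuclideanSpace ℝ (Fin n))‖ := norm_nonneg _
      nlinarith
    · -- ξ ≠ 0 : g agrees near ξ with a smooth function
      have hTξ : T ξ ≠ 0 := by
        intro h
        apply hne
        have hq : ∀ i, ξ i = 0 := by
          intro i
          have hi := congrFun (congrArg (fun (z : EuclideanSpace ℝ (Fin n)) (i : Fin n) => z i) h) i
          simp only [hTapply, PiLp.zero_apply] at hi
          have hsq : Real.sqrt (γ i) ≠ 0 := ne_of_gt (Real.sqrt_pos.mpr (hγ i))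
          exact (mul_eq_zero.mp hi).resolve_left hsq
        ext i
        simp [hq i]
      have hT : DifferentiableAt ℝ (fun y => ‖T y‖) ξ :=
        (T.differentiableAt).norm ℝ hTξ
      have hsm : DifferentiableAt ℝ (fun y => 1 + Real.cos ((π / c) * ‖T y‖)) ξ :=
        ((hT.const_mul (π / c)).cos).const_add 1
      have hopen : IsOpen {y | δ y < π} := isOpen_lt hδcont continuous_const
      have hev : g =ᶠ[nhds ξ] fun y => 1 + Real.cos ((π / c) * ‖T y‖) := by
        filter_upwards [hopen.mem_nhds hlt] with y hy
        rw [hg y, if_pos hy.le, hδT y]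
      exact hsm.congr_of_eventuallyEq hev
  · -- δ ξ = π : derivative zero, quadratic bound
    apply aux_differentiableAt_of_sq_bound g ξ (K ^ 2 / 2)
    have hgξ : g ξ = 0 := by
      rw [hg, heq, if_pos le_rfl, Real.cos_pi]; ring
    refine Filter.Eventually.of_forall fun y => ?_
    rw [hgξ, sub_zero, hg y]
    by_cases hy : δ y ≤ π
    · rw [if_pos hy]
      have h1 : (0:ℝ) ≤ 1 + Real.cos (δ y) := by nlinarith [Real.neg_one_le_cos (δ y)]
      rw [abs_of_nonneg h1]
      have hcos := aux_one_sub_cos_le_half_sq (δ y - π)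
      rw [Real.cos_sub_pi] at hcos
      have hb : |δ y - δ ξ| ≤ K * ‖y - ξ‖ := hKlip y ξ
      rw [heq] at hb
      have hsq : (δ y - π) ^ 2 ≤ (K * ‖y - ξ‖) ^ 2 := by
        rw [← sq_abs (δ y - π)]
        exact pow_le_pow_left₀ (abs_nonneg _) hb 2
      nlinarith
    · rw [if_neg hy]
      simp only [abs_zero]
      positivity
  · -- δ ξ > π : g vanishes near ξ
    have hopen : IsOpen {y | π < δ y} := isOpen_lt continuous_const hδcont
    have hev : g =ᶠ[nhds ξ] fun _ => (0 : ℝ) := by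
      filter_upwards [hopen.mem_nhds hgt] with y hy
      rw [hg y, if_neg (not_le.mpr hy)]
    exact (differentiableAt_const (0:ℝ)).congr_of_eventuallyEq hev
end

section
/- Fix a dimension n, a constant c > 0 and positive weights γ : Fin n → ℝ (γᵢ > 0 for all i). Define δ : ℝⁿ → ℝ by δ(ξ) = (π/c)·√(Σᵢ γᵢ ξᵢ²) and g : ℝⁿ → ℝ by g(ξ) = 1 + cos(δ(ξ)) if δ(ξ) ≤ π and g(ξ) = 0 otherwise. Then for every ξ ∈ ℝⁿ with δ(ξ) = π, g is differentiable at ξ with Fréchet derivative equal to the zero map. -/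
open Real

/-- Quadratic bound at the boundary: `1 + cos t ≤ (t - π)^2 / 2`. -/
lemma one_add_cos_le_half_sq (t : ℝ) : 1 + Real.cos t ≤ (t - π) ^ 2 / 2 := by
  have h := Real.one_sub_sq_div_two_le_cos (x := t - π)
  rw [Real.cos_sub_pi] at h
  linarith

/-- At the cutoff boundary `δ(ξ) = π`, the kernel `g` (equal to `1 + cos δ` inside the
cutoff and `0` outside) is differentiable with zero Fréchet derivative, since both the
function value and the one-sided derivatives vanish there (`sin π = 0`). -/
theorem kernel_differentiable_at_boundary
    (n : ℕ) (c : ℝ) (hc : 0 < c)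
    (γ : Fin n → ℝ) (hγ : ∀ i, 0 < γ i)
    (δ : EuclideanSpace ℝ (Fin n) → ℝ)
    (hδ : ∀ ξ, δ ξ = (π / c) * Real.sqrt (∑ i, γ i * ξ i ^ 2))
    (g : EuclideanSpace ℝ (Fin n) → ℝ)
    (hg : ∀ ξ, g ξ = if δ ξ ≤ π then 1 + Real.cos (δ ξ) else 0)
    (ξ : EuclideanSpace ℝ (Fin n)) (hξ : δ ξ = π) :
    HasFDerivAt g (0 : EuclideanSpace ℝ (Fin n) →L[ℝ] ℝ) ξ := by
  have hπc : 0 < π / c := div_pos Real.pi_pos hc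
  set M : ℝ := (∑ i, γ i) + 1 with hMdef
  have hsum_nonneg : 0 ≤ ∑ i, γ i := Finset.sum_nonneg fun i _ => (hγ i).le
  have hM : 0 < M := by positivity
  have hγM : ∀ i, γ i ≤ M := fun i => by
    have := Finset.single_le_sum (fun j _ => (hγ j).le) (Finset.mem_univ i)
    simp only [hMdef]; linarith
  -- the weighted map T
  set T : EuclideanSpace ℝ (Fin n) → EuclideanSpace ℝ (Fin n) :=
    fun v => WithLp.toLp 2 (fun i => Real.sqrt (γ i) * v i) with hTdef
  have hTnorm : ∀ v, ‖T v‖ = Real.sqrt (∑ i, γ i * v i ^ 2) := by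
    intro v
    rw [EuclideanSpace.norm_eq]
    congr 1
    refine Finset.sum_congr rfl fun i _ => ?_
    simp only [hTdef, PiLp.toLp_apply]
    rw [Real.norm_eq_abs, sq_abs, mul_pow, Real.sq_sqrt (hγ i).le]
  have hδT : ∀ v, δ v = (π / c) * ‖T v‖ := fun v => by rw [hδ, hTnorm]
  have hTsub : ∀ x y : EuclideanSpace ℝ (Fin n), T x - T y = T (x - y) := by
    intro x y
    ext i
    simp only [hTdef, PiLp.sub_apply, PiLp.toLp_apply]
    ring
  have hTbound : ∀ v : EuclideanSpace ℝ (Fin n), ‖T v‖ ≤ Real.sqrt M * ‖v‖ := by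
    intro v
    rw [hTnorm, EuclideanSpace.norm_eq, ← Real.sqrt_mul hM.le]
    apply Real.sqrt_le_sqrt
    rw [Finset.mul_sum]
    refine Finset.sum_le_sum fun i _ => ?_
    rw [Real.norm_eq_abs, sq_abs]
    exact mul_le_mul_of_nonneg_right (hγM i) (sq_nonneg _)
  set L : ℝ := (π / c) * Real.sqrt M with hLdef
  have hL : 0 < L := mul_pos hπc (Real.sqrt_pos.2 hM)
  have hδdiff : ∀ x, |δ x - δ ξ| ≤ L * ‖x - ξ‖ := by
    intro x
    rw [hδT, hδT, ← mul_sub, abs_mul, abs_of_pos hπc, hLdef, mul_assoc]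
    apply mul_le_mul_of_nonneg_left _ hπc.le
    calc |‖T x‖ - ‖T ξ‖| ≤ ‖T x - T ξ‖ := abs_norm_sub_norm_le _ _
      _ = ‖T (x - ξ)‖ := by rw [hTsub]
      _ ≤ Real.sqrt M * ‖x - ξ‖ := hTbound _
  set K : ℝ := L ^ 2 / 2 with hKdef
  have hK : 0 < K := by positivity
  have hgbound : ∀ x, |g x| ≤ K * ‖x - ξ‖ ^ 2 := by
    intro x
    have hsq : (δ x - π) ^ 2 ≤ (L * ‖x - ξ‖) ^ 2 := by
      rw [← sq_abs (δ x - π)]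
      apply pow_le_pow_left₀ (abs_nonneg _)
      rw [← hξ]
      exact hδdiff x
    rw [hg]
    split_ifs with h
    · have h1 : 0 ≤ 1 + Real.cos (δ x) := by
        have := Real.neg_one_le_cos (δ x); linarith
      rw [abs_of_nonneg h1]
      calc 1 + Real.cos (δ x) ≤ (δ x - π) ^ 2 / 2 := one_add_cos_le_half_sq _
        _ ≤ (L * ‖x - ξ‖) ^ 2 / 2 := by linarith
        _ = K * ‖x - ξ‖ ^ 2 := by rw [hKdef]; ring
    · simp only [abs_zero]
      positivity
  have hgξ : g ξ = 0 := by rw [hg, hξ]; simp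
  rw [hasFDerivAt_iff_isLittleO_nhds_zero, Asymptotics.isLittleO_iff]
  intro ε hε
  rw [Metric.eventually_nhds_iff]
  refine ⟨ε / K, div_pos hε hK, fun {h} hx => ?_⟩
  rw [dist_zero_right] at hx
  have hb := hgbound (ξ + h)
  rw [add_sub_cancel_left] at hb
  rw [hgξ]
  simp only [sub_zero, ContinuousLinearMap.zero_apply, Real.norm_eq_abs]
  calc |g (ξ + h)| ≤ K * ‖h‖ ^ 2 := hb
    _ = (K * ‖h‖) * ‖h‖ := by ring
    _ ≤ ε * ‖h‖ := by
        apply mul_le_mul_of_nonneg_right _ (norm_nonneg _)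
        calc K * ‖h‖ ≤ K * (ε / K) := mul_le_mul_of_nonneg_left hx.le hK.le
          _ = ε := by field_simp
end

section
/- Fix a dimension n, a constant c > 0 and positive weights γ : Fin n → ℝ (γᵢ > 0 for all i). Define δ : ℝⁿ → ℝ by δ(ξ) = (π/c)·√(Σᵢ γᵢ ξᵢ²) and g : ℝⁿ → ℝ by g(ξ) = 1 + cos(δ(ξ)) if δ(ξ) ≤ π and g(ξ) = 0 otherwise. Let S be a finite set of viewpoints v ∈ ℝⁿ with associated information values I_v ∈ ℝ, define η(x) = Σ_{v∈S} g(v − x), β(x) = Σ_{v∈S} I_v · g(v − x), and Ĩ(x) = β(x)/η(x). Let x ∈ ℝⁿ satisfy η(x) > 0 and δ(v − x) ≠ 0 for every v ∈ S. Then Ĩ is differentiable at x, and the gradient of Ĩ at x equals (π/(c·η(x)))² · Σ_{v ∈ S, δ(v−x) ≤ π} [η(x)·I_v − β(x)] · (sin δ(v−x)/δ(v−x)) · Γ(v − x), where Γ = diag(γ). -/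
open Real

open scoped Classical

open Filter Asymptotics in
lemma hasDerivAt_sq_max (u : ℝ) :
    HasDerivAt (fun t : ℝ => max t 0 ^ 2) (2 * max u 0) u := by
  rcases lt_trichotomy u 0 with h | h | h
  · have h0 : HasDerivAt (fun _ : ℝ => (0:ℝ)) 0 u := hasDerivAt_const u 0
    have heq : (fun t : ℝ => max t 0 ^ 2) =ᶠ[nhds u] fun _ => (0:ℝ) := by
      filter_upwards [Iio_mem_nhds h] with t ht
      simp [max_eq_right (Set.mem_Iio.mp ht).le]
    have := h0.congr_of_eventuallyEq heq
    simpa [max_eq_right h.le] using this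
  · subst h
    rw [hasDerivAt_iff_isLittleO]
    simp only [sub_zero, smul_zero, max_self, ne_eq, OfNat.ofNat_ne_zero,
      not_false_eq_true, zero_pow, sub_zero, mul_zero]
    rw [Asymptotics.isLittleO_iff]
    intro ε hε
    filter_upwards [Metric.ball_mem_nhds (0:ℝ) hε] with t ht
    have h1 : |max t 0| ≤ |t| := by
      rw [abs_of_nonneg (le_max_right t 0)]
      exact max_le (le_abs_self t) (abs_nonneg t)
    have h2 : |t| < ε := by simpa [Real.dist_eq] using ht
    calc ‖max t 0 ^ 2‖ = |max t 0| * |max t 0| := by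
          rw [Real.norm_eq_abs, abs_pow, sq]
      _ ≤ ε * ‖t‖ := by
          apply mul_le_mul (le_of_lt (lt_of_le_of_lt h1 h2)) h1 (abs_nonneg _)
          exact le_of_lt hε
  · have h0 : HasDerivAt (fun t : ℝ => t ^ 2) (2 * u) u := by
      simpa using (hasDerivAt_pow 2 u)
    have heq : (fun t : ℝ => max t 0 ^ 2) =ᶠ[nhds u] fun t => t ^ 2 := by
      filter_upwards [Ioi_mem_nhds h] with t ht
      simp [max_eq_left (Set.mem_Ioi.mp ht).le]
    have := h0.congr_of_eventuallyEq heq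
    simpa [max_eq_left h.le] using this


set_option maxHeartbeats 1000000 in
/-- Closed-form gradient of the approximate mutual information (translation form of
Proposition 2): at a point `x` with `η(x) > 0` and `δ(v − x) ≠ 0` for all viewpoints
`v ∈ S`, the map `Ĩ = β/η` is differentiable and its Fréchet derivative in direction
`h` equals `(π/(c·η(x)))² · ∑_{v ∈ S, δ(v−x) ≤ π} (η(x)·I_v − β(x)) ·
(sin δ(v−x)/δ(v−x)) · ⟨Γ(v−x), h⟩`. -/
theorem approxSMI_gradient
    (n : ℕ) (c : ℝ) (hc : 0 < c)
    (γ : Fin n → ℝ) (hγ : ∀ i, 0 < γ i)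
    (δ : EuclideanSpace ℝ (Fin n) → ℝ)
    (hδ : ∀ ξ, δ ξ = (π / c) * Real.sqrt (∑ i, γ i * ξ i ^ 2))
    (g : EuclideanSpace ℝ (Fin n) → ℝ)
    (hg : ∀ ξ, g ξ = if δ ξ ≤ π then 1 + Real.cos (δ ξ) else 0)
    (S : Finset (EuclideanSpace ℝ (Fin n)))
    (I : EuclideanSpace ℝ (Fin n) → ℝ)
    (η β Iapprox : EuclideanSpace ℝ (Fin n) → ℝ)
    (hη : ∀ x, η x = ∑ v ∈ S, g (v - x))
    (hβ : ∀ x, β x = ∑ v ∈ S, I v * g (v - x))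
    (hIapprox : ∀ x, Iapprox x = β x / η x)
    (x : EuclideanSpace ℝ (Fin n))
    (hηx : 0 < η x)
    (hδx : ∀ v ∈ S, δ (v - x) ≠ 0) :
    DifferentiableAt ℝ Iapprox x ∧
      ∀ h : EuclideanSpace ℝ (Fin n),
        fderiv ℝ Iapprox x h
          = (π / (c * η x)) ^ 2 *
              ∑ v ∈ S.filter (fun v => δ (v - x) ≤ π),
                (η x * I v - β x) * (Real.sin (δ (v - x)) / δ (v - x)) *
                  ∑ i, γ i * (v - x) i * h i := by
  classical
  have hcne : c ≠ 0 := hc.ne'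
  have hπ : (0:ℝ) < π := Real.pi_pos
  -- quadratic form
  set q : EuclideanSpace ℝ (Fin n) → ℝ := fun ξ => ∑ i, γ i * ξ i ^ 2 with hq_def
  have hq_nonneg : ∀ ξ, 0 ≤ q ξ :=
    fun ξ => Finset.sum_nonneg fun i _ => mul_nonneg (hγ i).le (sq_nonneg _)
  -- derivative of q
  have hq' : ∀ ξ : EuclideanSpace ℝ (Fin n), HasFDerivAt q
      (∑ i, (2 * γ i * ξ i) • EuclideanSpace.proj (𝕜 := ℝ) i) ξ := by
    intro ξ
    apply HasFDerivAt.fun_sum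
    intro i _
    have hp : HasFDerivAt (fun ζ : EuclideanSpace ℝ (Fin n) => ζ i)
        (EuclideanSpace.proj (𝕜 := ℝ) i : EuclideanSpace ℝ (Fin n) →L[ℝ] ℝ) ξ :=
      (EuclideanSpace.proj (𝕜 := ℝ) i).hasFDerivAt
    have h3 := (hp.mul hp).const_mul (γ i)
    refine HasFDerivAt.congr_of_eventuallyEq (h3.congr_fderiv ?_)
      (Filter.Eventually.of_forall fun ζ => ?_)
    · ext h
      simp only [ContinuousLinearMap.smul_apply, ContinuousLinearMap.add_apply,
        PiLp.proj_apply, smul_eq_mul]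
      ring
    · simp only [Pi.mul_apply]; ring
  -- inner map y ↦ v - y
  have hinner : ∀ v : EuclideanSpace ℝ (Fin n),
      HasFDerivAt (fun y : EuclideanSpace ℝ (Fin n) => v - y)
      ((0 : EuclideanSpace ℝ (Fin n) →L[ℝ] EuclideanSpace ℝ (Fin n)) -
        ContinuousLinearMap.id ℝ (EuclideanSpace ℝ (Fin n))) x :=
    fun v => (hasFDerivAt_const v x).sub (hasFDerivAt_id x)
  have hqv : ∀ v : EuclideanSpace ℝ (Fin n),
      HasFDerivAt (fun y : EuclideanSpace ℝ (Fin n) => q (v - y))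
      ((∑ i, (2 * γ i * (v - x) i) • EuclideanSpace.proj (𝕜 := ℝ) i).comp
        ((0 : EuclideanSpace ℝ (Fin n) →L[ℝ] EuclideanSpace ℝ (Fin n)) -
          ContinuousLinearMap.id ℝ (EuclideanSpace ℝ (Fin n)))) x :=
    fun v => (hq' (v - x)).comp x (hinner v)
  have hδq : ∀ ξ : EuclideanSpace ℝ (Fin n), δ ξ = (π / c) * Real.sqrt (q ξ) := hδ
  -- per-viewpoint derivative
  set Dv : EuclideanSpace ℝ (Fin n) → (EuclideanSpace ℝ (Fin n) →L[ℝ] ℝ) := fun v =>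
    if δ (v - x) ≤ π then
      ((π / c) ^ 2 * (Real.sin (δ (v - x)) / δ (v - x))) •
        (∑ i, (γ i * (v - x) i) • EuclideanSpace.proj (𝕜 := ℝ) i)
    else 0 with hDv_def
  have key : ∀ v ∈ S, HasFDerivAt
      (fun y : EuclideanSpace ℝ (Fin n) => g (v - y)) (Dv v) x := by
    intro v hv
    by_cases hle : δ (v - x) ≤ π
    · -- nontrivial case
      have hd0 : δ (v - x) ≠ 0 := hδx v hv
      have hsq : Real.sqrt (q (v - x)) = c * δ (v - x) / π := by
        rw [hδq (v - x)]
        field_simp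
      have hdnn : 0 ≤ δ (v - x) := by
        rw [hδq (v - x)]; positivity
      have hdpos : 0 < δ (v - x) := lt_of_le_of_ne hdnn (Ne.symm hd0)
      have ht0pos : 0 < q (v - x) := by
        rcases lt_or_eq_of_le (hq_nonneg (v - x)) with h | h
        · exact h
        · exfalso
          apply hd0
          rw [hδq (v - x), ← h, Real.sqrt_zero, mul_zero]
      have hθ : (π / (2 * c)) * Real.sqrt (q (v - x)) = δ (v - x) / 2 := by
        rw [hsq]; field_simp
      have hcosd2 : 0 ≤ Real.cos (δ (v - x) / 2) := by
        apply Real.cos_nonneg_of_mem_Icc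
        constructor <;> [linarith; linarith]
      -- derivative of the smooth model composed with q ∘ (v - ·)
      have h1 : HasDerivAt Real.sqrt (1 / (2 * Real.sqrt (q (v - x)))) (q (v - x)) :=
        Real.hasDerivAt_sqrt ht0pos.ne'
      have h2 := h1.const_mul (π / (2 * c))
      have h3 := h2.cos
      have h4 := (hasDerivAt_sq_max
        (Real.cos ((π / (2 * c)) * Real.sqrt (q (v - x))))).comp (q (v - x)) h3
      have h5 := h4.const_mul (2 : ℝ)
      have hF' : HasDerivAt
          (fun t : ℝ => 2 * max (Real.cos ((π / (2 * c)) * Real.sqrt t)) 0 ^ 2)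
          (2 * (2 * max (Real.cos ((π / (2 * c)) * Real.sqrt (q (v - x)))) 0 *
            (-Real.sin ((π / (2 * c)) * Real.sqrt (q (v - x))) *
              (π / (2 * c) * (1 / (2 * Real.sqrt (q (v - x)))))))) (q (v - x)) := by
        exact h5
      have hcomp := hF'.comp_hasFDerivAt x (hqv v)
      -- local agreement of g with the smooth model
      have hglob : ∀ ξ : EuclideanSpace ℝ (Fin n), q ξ < 9 * c ^ 2 →
          g ξ = 2 * max (Real.cos ((π / (2 * c)) * Real.sqrt (q ξ))) 0 ^ 2 := by
        intro ξ hξ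
        have hs0 : 0 ≤ Real.sqrt (q ξ) := Real.sqrt_nonneg _
        have hslt : Real.sqrt (q ξ) < 3 * c := by
          have h9 : Real.sqrt (q ξ) < Real.sqrt (9 * c ^ 2) :=
            Real.sqrt_lt_sqrt (hq_nonneg ξ) hξ
          rwa [show (9:ℝ) * c ^ 2 = (3 * c) ^ 2 by ring,
            Real.sqrt_sq (by positivity)] at h9
        have hδs : δ ξ = (π / c) * Real.sqrt (q ξ) := hδq ξ
        have hhalf : (π / (2 * c)) * Real.sqrt (q ξ) = δ ξ / 2 := by
          rw [hδs]; ring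
        have hδnn : 0 ≤ δ ξ := by rw [hδs]; positivity
        rw [hg, hhalf]
        by_cases hle' : δ ξ ≤ π
        · have hc2 : 0 ≤ Real.cos (δ ξ / 2) := by
            apply Real.cos_nonneg_of_mem_Icc
            constructor <;> [linarith; linarith]
          rw [if_pos hle', max_eq_left hc2]
          have hh := Real.cos_two_mul (δ ξ / 2)
          rw [show 2 * (δ ξ / 2) = δ ξ by ring] at hh
          rw [hh]; ring
        · have hgt : π < δ ξ := lt_of_not_ge hle'
          have hδlt : δ ξ < 3 * π := by
            rw [hδs]
            calc (π / c) * Real.sqrt (q ξ) < (π / c) * (3 * c) := by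
                  apply mul_lt_mul_of_pos_left hslt; positivity
              _ = 3 * π := by field_simp
          have hcneg : Real.cos (δ ξ / 2) ≤ 0 := by
            apply Real.cos_nonpos_of_pi_div_two_le_of_le
            · linarith
            · linarith
          rw [if_neg hle', max_eq_right hcneg]
          ring
      have hval : q (v - x) < 9 * c ^ 2 := by
        have h1' : Real.sqrt (q (v - x)) ≤ c := by
          rw [hsq, div_le_iff₀ hπ]
          nlinarith
        nlinarith [Real.sq_sqrt (hq_nonneg (v - x)), Real.sqrt_nonneg (q (v - x))]
      have hevq : ∀ᶠ y in nhds x, q (v - y) < 9 * c ^ 2 :=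
        ((hqv v).differentiableAt.continuousAt).eventually_lt continuousAt_const hval
      have heq : (fun y : EuclideanSpace ℝ (Fin n) => g (v - y)) =ᶠ[nhds x]
          ((fun t : ℝ => 2 * max (Real.cos ((π / (2 * c)) * Real.sqrt t)) 0 ^ 2) ∘
            fun y : EuclideanSpace ℝ (Fin n) => q (v - y)) := by
        filter_upwards [hevq] with y hy
        simp only [Function.comp_apply]
        exact hglob (v - y) hy
      have hfinal := hcomp.congr_of_eventuallyEq heq
      refine hfinal.congr_fderiv (Eq.symm ?_)
      rw [hDv_def]
      simp only [if_pos hle]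
      ext h
      rw [hθ]
      have hmax : max (Real.cos (δ (v - x) / 2)) 0 = Real.cos (δ (v - x) / 2) :=
        max_eq_left hcosd2
      simp only [ContinuousLinearMap.smul_apply, ContinuousLinearMap.sum_apply,
        ContinuousLinearMap.coe_comp', Function.comp_apply, ContinuousLinearMap.sub_apply,
        ContinuousLinearMap.zero_apply, ContinuousLinearMap.coe_id', id_eq, zero_sub,
        ContinuousLinearMap.neg_apply, PiLp.neg_apply,
        PiLp.proj_apply, smul_eq_mul, hmax]
      have hsind : Real.sin (δ (v - x)) =
          2 * Real.sin (δ (v - x) / 2) * Real.cos (δ (v - x) / 2) := by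
        have hh := Real.sin_two_mul (δ (v - x) / 2)
        rw [show 2 * (δ (v - x) / 2) = δ (v - x) by ring] at hh
        linarith [hh]
      rw [Finset.mul_sum, Finset.mul_sum]
      apply Finset.sum_congr rfl
      intro i _
      rw [hsind, hsq]
      have hπne : π ≠ 0 := Real.pi_ne_zero
      field_simp
    · -- zero case
      have hgt : π < δ (v - x) := lt_of_not_ge hle
      have hcont : ContinuousAt (fun y : EuclideanSpace ℝ (Fin n) => δ (v - y)) x := by
        have hfe : (fun y : EuclideanSpace ℝ (Fin n) => δ (v - y))
            = fun y => (π / c) * Real.sqrt (q (v - y)) := by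
          funext y; exact hδq (v - y)
        rw [hfe]
        exact continuousAt_const.mul
          (Real.continuous_sqrt.continuousAt.comp
            (hqv v).differentiableAt.continuousAt)
      have hev : ∀ᶠ y in nhds x, π < δ (v - y) :=
        continuousAt_const.eventually_lt hcont hgt
      have heq : (fun y : EuclideanSpace ℝ (Fin n) => g (v - y)) =ᶠ[nhds x]
          fun _ => (0:ℝ) := by
        filter_upwards [hev] with y hy
        rw [hg, if_neg (not_le_of_gt hy)]
      have hzero : HasFDerivAt (fun y : EuclideanSpace ℝ (Fin n) => g (v - y))
          (0 : EuclideanSpace ℝ (Fin n) →L[ℝ] ℝ) x :=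
        (hasFDerivAt_const (0:ℝ) x).congr_of_eventuallyEq heq
      rw [hDv_def]
      simp only [if_neg hle]
      exact hzero
  -- derivatives of η and β
  have hηfun : η = fun y => ∑ v ∈ S, g (v - y) := funext hη
  have hβfun : β = fun y => ∑ v ∈ S, I v * g (v - y) := funext hβ
  have hη' : HasFDerivAt η (∑ v ∈ S, Dv v) x := by
    rw [hηfun]; exact HasFDerivAt.fun_sum fun v hv => key v hv
  have hβ' : HasFDerivAt β (∑ v ∈ S, I v • Dv v) x := by
    rw [hβfun]; exact HasFDerivAt.fun_sum fun v hv => (key v hv).const_mul (I v)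
  have hηne : η x ≠ 0 := hηx.ne'
  have hinv : HasFDerivAt (fun y => (η y)⁻¹) ((-(η x ^ 2)⁻¹) • (∑ v ∈ S, Dv v)) x := by
    have h1 : HasDerivAt (fun t : ℝ => t⁻¹) (-(η x ^ 2)⁻¹) (η x) := hasDerivAt_inv hηne
    exact h1.comp_hasFDerivAt x hη'
  have hIfun : Iapprox = fun y => β y * (η y)⁻¹ := by
    funext y; rw [hIapprox]; ring
  have hT : HasFDerivAt Iapprox
      (β x • ((-(η x ^ 2)⁻¹) • (∑ v ∈ S, Dv v)) + (η x)⁻¹ • (∑ v ∈ S, I v • Dv v)) x := by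
    rw [hIfun]
    exact hβ'.mul hinv
  refine ⟨hT.differentiableAt, fun h => ?_⟩
  rw [hT.fderiv]
  have happ : ∀ v, (Dv v) h = if δ (v - x) ≤ π then
      ((π / c) ^ 2 * (Real.sin (δ (v - x)) / δ (v - x))) * ∑ i, γ i * (v - x) i * h i
    else 0 := by
    intro v
    rw [hDv_def]
    by_cases hle : δ (v - x) ≤ π
    · simp only [if_pos hle, ContinuousLinearMap.smul_apply, ContinuousLinearMap.sum_apply,
        PiLp.proj_apply, smul_eq_mul]
    · simp [if_neg hle]
  simp only [ContinuousLinearMap.add_apply, ContinuousLinearMap.smul_apply,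
    ContinuousLinearMap.sum_apply, smul_eq_mul]
  rw [Finset.mul_sum, Finset.mul_sum, Finset.mul_sum, ← Finset.sum_add_distrib,
    Finset.sum_filter, Finset.mul_sum]
  apply Finset.sum_congr rfl
  intro v hv
  rw [happ v]
  by_cases hle : δ (v - x) ≤ π
  · rw [if_pos hle, if_pos hle]
    set K := ∑ i, γ i * (v - x) i * h i with hK
    have hd0 : δ (v - x) ≠ 0 := hδx v hv
    field_simp
    ring
  · rw [if_neg hle, if_neg hle]
    ring
end
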